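/- Let 2 < α < 4, c > 0 and 0 < β ≤ 1. On a probability space, let {(Q_k, h_k, T_k)}_{k≥2} be a mutually independent family of random variables where Q_k has the Gamma distribution with shape k and rate c/β, h_k is exponential with mean 1, and T_k is Bernoulli with P(T_k = 1) = β. Then the random series I = Σ_{k=2}^∞ Q_k^{−α/2} h_k T_k converges almost surely and E[I] = −c^{α/2} β^{1−α/2} Γ(1 − α/2), where Γ denotes the Gamma function (analytically continued to the negative non-integer argument 1 − α/2 ∈ (−1, 0), where it is negative, so E[I] > 0). Equivalently, c ∫₀^∞ q^{−α/2} (1 − e^{−(c/β)q}) dq = −c^{α/2} β^{1−α/2} Γ(1 − α/2). -/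

import Mathlib

open Real MeasureTheory ProbabilityTheory Set

open Filter Topology Nat in
private lemma gmi_integrableOn_rpow_exp {b r : ℝ} (hb : 0 < b) (hr : 0 < r) :
    IntegrableOn (fun x : ℝ => x ^ (b - 1) * Real.exp (-(r * x))) (Ioi 0) := by
  have h0 := Real.GammaIntegral_convergent hb
  have h1 : IntegrableOn (fun x : ℝ => Real.exp (-(r * x)) * (r * x) ^ (b - 1)) (Ioi 0) := by
    have := (integrableOn_Ioi_comp_mul_left_iff
      (fun x : ℝ => Real.exp (-x) * x ^ (b - 1)) 0 hr).mpr (by simpa using h0)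
    simpa using this
  have h2 : IntegrableOn
      (fun x : ℝ => r ^ (1 - b) * (Real.exp (-(r * x)) * (r * x) ^ (b - 1))) (Ioi 0) :=
    h1.const_mul (r ^ (1 - b))
  refine IntegrableOn.congr_fun h2 (fun x hx => ?_) measurableSet_Ioi
  have hx0 : (0:ℝ) < x := hx
  rw [Real.mul_rpow hr.le hx0.le]
  rw [show r ^ (1-b) * (Real.exp (-(r*x)) * (r ^ (b-1) * x ^ (b-1)))
    = (r ^ (1-b) * r ^ (b-1)) * (x ^ (b-1) * Real.exp (-(r*x))) by ring,
    ← Real.rpow_add hr]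
  norm_num

open Filter Topology Nat in
private lemma gmi_lintegral_rpow_exp {b r : ℝ} (hb : 0 < b) (hr : 0 < r) :
    ∫⁻ x in Ioi (0:ℝ), ENNReal.ofReal (x ^ (b - 1) * Real.exp (-(r * x)))
      = ENNReal.ofReal ((1 / r) ^ b * Real.Gamma b) := by
  rw [← integral_rpow_mul_exp_neg_mul_Ioi hb hr]
  refine (ofReal_integral_eq_lintegral_ofReal (gmi_integrableOn_rpow_exp hb hr) ?_).symm
  filter_upwards [ae_restrict_mem measurableSet_Ioi] with x hx
  have hx0 : (0:ℝ) < x := hx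
  positivity

open Filter Topology Nat in
private lemma gmi_gamma_moment {a r t : ℝ} (ha : 0 < a) (hr : 0 < r) (hta : t < a) :
    ∫⁻ x, ENNReal.ofReal (x ^ (-t)) ∂(gammaMeasure a r)
      = ENNReal.ofReal (r ^ t * (Real.Gamma (a - t) / Real.Gamma a)) := by
  have hF : Measurable fun x : ℝ => ENNReal.ofReal (x ^ (-t)) :=
    (measurable_id.pow measurable_const).ennreal_ofReal
  have hpdf : Measurable (gammaPDF a r) := (measurable_gammaPDFReal a r).ennreal_ofReal
  rw [gammaMeasure, lintegral_withDensity_eq_lintegral_mul _ hpdf hF]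
  rw [← lintegral_add_compl (μ := volume) _ (measurableSet_Ioi (a := (0:ℝ)))]
  have hcompl : ∫⁻ x in (Ioi (0:ℝ))ᶜ, (gammaPDF a r * fun x => ENNReal.ofReal (x ^ (-t))) x = 0 := by
    rw [compl_Ioi]
    have hae : ∀ᵐ x ∂(volume.restrict (Iic (0:ℝ))),
        (gammaPDF a r * fun x => ENNReal.ofReal (x ^ (-t))) x = 0 := by
      have hne : ∀ᵐ x : ℝ ∂volume, x ≠ 0 := by
        rw [ae_iff]; simpa using (Real.volume_singleton (a := 0)).le
      filter_upwards [ae_restrict_mem measurableSet_Iic, ae_restrict_of_ae hne] with x hx hx0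
      have : x < 0 := lt_of_le_of_ne hx hx0
      simp [gammaPDF_of_neg this]
    rw [lintegral_congr_ae hae, lintegral_zero]
  rw [hcompl, add_zero]
  have hmain : ∫⁻ x in Ioi (0:ℝ), (gammaPDF a r * fun x => ENNReal.ofReal (x ^ (-t))) x
      = ENNReal.ofReal (r ^ a / Real.Gamma a)
        * ∫⁻ x in Ioi (0:ℝ), ENNReal.ofReal (x ^ ((a - t) - 1) * Real.exp (-(r * x))) := by
    have hg : Measurable fun x : ℝ => ENNReal.ofReal (x ^ ((a - t) - 1) * Real.exp (-(r * x))) :=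
      ((measurable_id'.pow measurable_const).mul
        ((measurable_const.mul measurable_id').neg.exp)).ennreal_ofReal
    rw [← lintegral_const_mul _ hg]
    refine setLIntegral_congr_fun measurableSet_Ioi (fun x hx => ?_)
    have hx0 : (0:ℝ) < x := hx
    rw [Pi.mul_apply, gammaPDF_of_nonneg hx0.le]
    rw [← ENNReal.ofReal_mul (by positivity), ← ENNReal.ofReal_mul (by positivity)]
    congr 1
    rw [show r ^ a / Real.Gamma a * x ^ (a-1) * Real.exp (-(r*x)) * x ^ (-t)
      = r ^ a / Real.Gamma a * ((x ^ (a-1) * x ^ (-t)) * Real.exp (-(r*x))) by ring,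
      ← Real.rpow_add hx0]
    ring_nf
  rw [hmain, gmi_lintegral_rpow_exp (by linarith) hr,
    ← ENNReal.ofReal_mul (by positivity)]
  congr 1
  rw [one_div, Real.inv_rpow hr.le, ← Real.rpow_neg hr.le]
  rw [show r ^ a / Real.Gamma a * (r ^ (-(a-t)) * Real.Gamma (a-t))
    = (r ^ a * r ^ (-(a-t))) * (Real.Gamma (a-t) / Real.Gamma a) by ring, ← Real.rpow_add hr]
  ring_nf

open Filter Topology Nat in
private lemma gmi_exp_mean : ∫⁻ x, ENNReal.ofReal x ∂(expMeasure 1) = 1 := by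
  have h := gmi_gamma_moment (a := 1) (r := 1) (t := -1) one_pos one_pos (by norm_num)
  rw [show expMeasure 1 = gammaMeasure 1 1 from rfl]
  have h2 : ∫⁻ x, ENNReal.ofReal (x ^ (-(-1):ℝ)) ∂(gammaMeasure 1 1)
      = ∫⁻ x, ENNReal.ofReal x ∂(gammaMeasure 1 1) := by
    apply lintegral_congr; intro x; norm_num
  rw [← h2, h]
  norm_num [Real.Gamma_two, Real.Gamma_one]

open Filter Topology Nat in
private lemma gmi_bern_mean {β : ℝ} :
    ∫⁻ x, ENNReal.ofReal x
      ∂(ENNReal.ofReal (1 - β) • Measure.dirac (0 : ℝ) + ENNReal.ofReal β • Measure.dirac 1)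
      = ENNReal.ofReal β := by
  rw [lintegral_add_measure, lintegral_smul_measure, lintegral_smul_measure,
    lintegral_dirac, lintegral_dirac]
  simp

open Filter Topology Nat in
private lemma gmi_integrableOn_main {s r : ℝ} (hs1 : 1 < s) (hs2 : s < 2) (hr : 0 < r) :
    IntegrableOn (fun q : ℝ => q ^ (-s) * (1 - Real.exp (-(r * q)))) (Ioi 0) := by
  have hmeas : AEStronglyMeasurable (fun q : ℝ => q ^ (-s) * (1 - Real.exp (-(r * q)))) volume :=
    ((measurable_id'.pow measurable_const).mul
      (measurable_const.sub (measurable_const.mul measurable_id').neg.exp)).aestronglyMeasurable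
  have hIoc : IntegrableOn (fun q : ℝ => q ^ (-s) * (1 - Real.exp (-(r * q)))) (Ioc 0 1) := by
    have hb : IntegrableOn (fun q : ℝ => r * q ^ (1 - s)) (Ioc 0 1) := by
      exact ((intervalIntegral.intervalIntegrable_rpow' (a := 0) (b := 1)
        (r := 1 - s) (by linarith)).1).const_mul r
    refine Integrable.mono' hb hmeas.restrict ?_
    filter_upwards [ae_restrict_mem measurableSet_Ioc] with q hq
    obtain ⟨hq0, hq1⟩ := hq
    have h1 : 0 ≤ 1 - Real.exp (-(r * q)) := by
      have : Real.exp (-(r * q)) ≤ 1 := Real.exp_le_one_iff.mpr (by nlinarith)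
      linarith
    have h2 : 1 - Real.exp (-(r * q)) ≤ r * q := by
      have := Real.add_one_le_exp (-(r * q)); linarith
    rw [Real.norm_eq_abs, abs_of_nonneg (by positivity)]
    calc q ^ (-s) * (1 - Real.exp (-(r * q))) ≤ q ^ (-s) * (r * q) :=
          mul_le_mul_of_nonneg_left h2 (by positivity)
      _ = r * q ^ (1 - s) := by
          rw [show q ^ (-s) * (r * q) = r * (q ^ (-s) * q ^ (1:ℝ)) by rw [Real.rpow_one]; ring,
            ← Real.rpow_add hq0, show -s + (1:ℝ) = 1 - s by ring]
  have hIoi : IntegrableOn (fun q : ℝ => q ^ (-s) * (1 - Real.exp (-(r * q)))) (Ioi 1) := by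
    refine Integrable.mono' (integrableOn_Ioi_rpow_of_lt (a := -s) (by linarith) one_pos)
      hmeas.restrict ?_
    filter_upwards [ae_restrict_mem measurableSet_Ioi] with q hq
    have hq0 : (0:ℝ) < q := by linarith [mem_Ioi.mp hq]
    have h1 : 0 ≤ 1 - Real.exp (-(r * q)) := by
      have : Real.exp (-(r * q)) ≤ 1 := Real.exp_le_one_iff.mpr (by nlinarith)
      linarith
    have h2 : 1 - Real.exp (-(r * q)) ≤ 1 := by
      have := Real.exp_pos (-(r * q)); linarith
    rw [Real.norm_eq_abs, abs_of_nonneg (by positivity)]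
    calc q ^ (-s) * (1 - Real.exp (-(r * q))) ≤ q ^ (-s) * 1 :=
        mul_le_mul_of_nonneg_left h2 (by positivity)
      _ = q ^ (-s) := mul_one _
  have := hIoc.union hIoi
  rwa [Ioc_union_Ioi_eq_Ioi (by norm_num : (0:ℝ) ≤ 1)] at this

open Filter Topology Nat in
private lemma gmi_integral_main {s r : ℝ} (hs1 : 1 < s) (hs2 : s < 2) (hr : 0 < r) :
    ∫ q in Ioi (0:ℝ), q ^ (-s) * (1 - Real.exp (-(r * q)))
      = r ^ (s - 1) * Real.Gamma (2 - s) / (s - 1) := by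
  have hs1' : s - 1 ≠ 0 := by intro hc; rw [sub_eq_zero] at hc; exact absurd hc.symm (by linarith)
  have h1s : (1:ℝ) - s ≠ 0 := by intro hc; rw [sub_eq_zero] at hc; linarith [hc.symm]
  set F : ℝ → ℝ := fun q => (1 - s)⁻¹ * (q ^ (1 - s) * (1 - Real.exp (-(r * q)))) with hF
  set f' : ℝ → ℝ := fun q =>
    q ^ (-s) * (1 - Real.exp (-(r * q))) + (1 - s)⁻¹ * r * (q ^ (1 - s) * Real.exp (-(r * q)))
    with hf'
  have hF0 : F 0 = 0 := by simp [hF]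
  have hderiv : ∀ q ∈ Ioi (0:ℝ), HasDerivAt F (f' q) q := by
    intro q hq
    have hq0 : (0:ℝ) < q := hq
    have h1 : HasDerivAt (fun q : ℝ => q ^ (1 - s)) ((1 - s) * q ^ ((1 - s) - 1)) q :=
      Real.hasDerivAt_rpow_const (Or.inl hq0.ne')
    have h2 : HasDerivAt (fun q : ℝ => 1 - Real.exp (-(r * q))) (r * Real.exp (-(r * q))) q := by
      have hlin : HasDerivAt (fun q : ℝ => -(r * q)) (-r) q := by
        exact ((hasDerivAt_id q).const_mul r).neg.congr_deriv (by simp)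
      have := (hlin.exp).const_sub 1
      exact this.congr_deriv (by ring)
    have := ((h1.mul h2).const_mul ((1 - s)⁻¹))
    refine this.congr_deriv ?_
    rw [hf', show (1 - s) - 1 = -s by ring]
    field_simp
  have hcont : ContinuousWithinAt F (Ici 0) 0 := by
    rw [ContinuousWithinAt, hF0]
    have hcore : Tendsto (fun q : ℝ => q ^ (1 - s) * (1 - Real.exp (-(r * q))))
        (𝓝[Ici 0] 0) (𝓝 0) := by
      apply squeeze_zero' (g := fun q : ℝ => r * q ^ (2 - s))
      · filter_upwards [self_mem_nhdsWithin] with q hq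
        have hq0 : (0:ℝ) ≤ q := hq
        have : Real.exp (-(r * q)) ≤ 1 := Real.exp_le_one_iff.mpr (by nlinarith)
        have := Real.rpow_nonneg hq0 (1 - s)
        nlinarith
      · filter_upwards [self_mem_nhdsWithin] with q hq
        have hq0 : (0:ℝ) ≤ q := hq
        rcases eq_or_lt_of_le hq0 with h | h
        · rw [← h, Real.zero_rpow (by intro hc; rw [sub_eq_zero] at hc; linarith [hc.symm]),
            Real.zero_rpow (by intro hc; linarith [hc.symm])]
          simp
        · have h2 : 1 - Real.exp (-(r * q)) ≤ r * q := by
            have := Real.add_one_le_exp (-(r * q)); linarith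
          calc q ^ (1-s) * (1 - Real.exp (-(r * q))) ≤ q ^ (1-s) * (r * q) :=
              mul_le_mul_of_nonneg_left h2 (by positivity)
            _ = r * q ^ (2-s) := by
              rw [show q ^ (1-s) * (r * q) = r * (q ^ (1-s) * q ^ (1:ℝ)) by
                  rw [Real.rpow_one]; ring, ← Real.rpow_add h,
                show (1:ℝ) - s + 1 = 2 - s by ring]
      · have hc : ContinuousAt (fun q : ℝ => q ^ (2 - s)) 0 :=
          Real.continuousAt_rpow_const 0 (2 - s) (Or.inr (by linarith))
        have h5 : Tendsto (fun q : ℝ => q ^ (2 - s)) (𝓝[Ici 0] 0) (𝓝 (0 ^ (2 - s))) :=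
          hc.tendsto.mono_left nhdsWithin_le_nhds
        have := h5.const_mul r
        simpa [Real.zero_rpow (show (2:ℝ) - s ≠ 0 by intro hc'; linarith [hc'.symm])] using this
    have := hcore.const_mul ((1 - s)⁻¹)
    simpa [hF] using this
  have htop : Tendsto F atTop (𝓝 0) := by
    have h1 : Tendsto (fun q : ℝ => q ^ (1 - s)) atTop (𝓝 0) := by
      have := tendsto_rpow_neg_atTop (show (0:ℝ) < s - 1 by linarith)
      convert this using 2 with q
      · ring_nf
    have h2 : Tendsto (fun q : ℝ => 1 - Real.exp (-(r * q))) atTop (𝓝 1) := by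
      have hexp : Tendsto (fun q : ℝ => Real.exp (-(r * q))) atTop (𝓝 0) :=
        Real.tendsto_exp_neg_atTop_nhds_zero.comp (Tendsto.const_mul_atTop hr tendsto_id)
      simpa using tendsto_const_nhds.sub hexp
    have := (h1.mul h2).const_mul ((1 - s)⁻¹)
    simpa [hF] using this
  have hint2 : IntegrableOn (fun q : ℝ => q ^ (1 - s) * Real.exp (-(r * q))) (Ioi 0) := by
    have := gmi_integrableOn_rpow_exp (b := 2 - s) (by linarith) hr
    simpa [show (2:ℝ) - s - 1 = 1 - s by ring] using this
  have hint1 := gmi_integrableOn_main hs1 hs2 hr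
  have hf'int : IntegrableOn f' (Ioi 0) := hint1.add ((hint2.const_mul _))
  have hFTC := integral_Ioi_of_hasDerivAt_of_tendsto hcont hderiv hf'int htop
  rw [hF0, sub_zero] at hFTC
  have hsplit : ∫ q in Ioi (0:ℝ), f' q
      = (∫ q in Ioi (0:ℝ), q ^ (-s) * (1 - Real.exp (-(r * q))))
        + (1 - s)⁻¹ * r * ∫ q in Ioi (0:ℝ), q ^ (1 - s) * Real.exp (-(r * q)) := by
    rw [← integral_const_mul]
    exact integral_add hint1 (hint2.const_mul _)
  have hval : ∫ q in Ioi (0:ℝ), q ^ (1 - s) * Real.exp (-(r * q))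
      = (1 / r) ^ (2 - s) * Real.Gamma (2 - s) := by
    have := integral_rpow_mul_exp_neg_mul_Ioi (show (0:ℝ) < 2 - s by linarith) hr
    rw [← this]
    congr 1; ext q; rw [show (2:ℝ) - s - 1 = 1 - s by ring]
  rw [hsplit, hval] at hFTC
  have hpow : r * (1 / r) ^ (2 - s) = r ^ (s - 1) := by
    rw [one_div, Real.inv_rpow hr.le, ← Real.rpow_neg hr.le]
    nth_rewrite 1 [← Real.rpow_one r]
    rw [← Real.rpow_add hr]
    congr 1; ring
  have : (1 - s)⁻¹ * r * ((1 / r) ^ (2 - s) * Real.Gamma (2 - s))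
      = -(r ^ (s - 1) * Real.Gamma (2 - s) / (s - 1)) := by
    rw [show (1-s)⁻¹ * r * ((1/r) ^ (2-s) * Real.Gamma (2-s))
      = (1-s)⁻¹ * (r * (1/r) ^ (2-s)) * Real.Gamma (2-s) by ring, hpow]
    field_simp
    ring
  rw [this] at hFTC
  linarith

open Filter Topology Nat in
private lemma gmi_exp_sub_one (x : ℝ) :
    ∑' k : ℕ, x ^ (k + 1) / ((k + 1)! : ℝ) = Real.exp x - 1 := by
  have hsum : Summable fun n : ℕ => x ^ n / (n ! : ℝ) := Real.summable_pow_div_factorial x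
  have hexp : Real.exp x = ∑' n : ℕ, x ^ n / (n ! : ℝ) := by
    rw [Real.exp_eq_exp_ℝ, NormedSpace.exp_eq_tsum_div]
  rw [hexp, Summable.tsum_eq_zero_add hsum]
  simp

open Filter Topology Nat in
private lemma gmi_sum_gamma_ratio {s : ℝ} (hs1 : 1 < s) (hs2 : s < 2) :
    ∑' k : ℕ, ENNReal.ofReal (Real.Gamma ((k : ℝ) + 2 - s) / Real.Gamma ((k : ℝ) + 2))
      = ENNReal.ofReal (Real.Gamma (2 - s) / (s - 1)) := by
  have hb : ∀ k : ℕ, (0:ℝ) < (k : ℝ) + 2 - s := fun k => by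
    have : (0:ℝ) ≤ k := Nat.cast_nonneg k
    linarith
  have hterm : ∀ k : ℕ, ENNReal.ofReal (Real.Gamma ((k : ℝ) + 2 - s) / Real.Gamma ((k : ℝ) + 2))
      = ∫⁻ x in Ioi (0:ℝ),
          ENNReal.ofReal (x ^ ((k : ℝ) + 2 - s - 1) * Real.exp (-(1 * x)) * (((k+1)! : ℝ))⁻¹) := by
    intro k
    have hfact : Real.Gamma ((k : ℝ) + 2) = ((k+1)! : ℝ) := by
      have h := Real.Gamma_nat_eq_factorial (k + 1)
      rw [← h]
      congr 1
      push_cast; ring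
    have h1 := gmi_lintegral_rpow_exp (b := (k : ℝ) + 2 - s) (r := 1) (hb k) one_pos
    have hmeas : Measurable fun x : ℝ =>
        ENNReal.ofReal (x ^ ((k : ℝ) + 2 - s - 1) * Real.exp (-(1 * x))) :=
      ((measurable_id'.pow measurable_const).mul
        ((measurable_const.mul measurable_id').neg.exp)).ennreal_ofReal
    calc ENNReal.ofReal (Real.Gamma ((k : ℝ) + 2 - s) / Real.Gamma ((k : ℝ) + 2))
        = ENNReal.ofReal (Real.Gamma ((k : ℝ) + 2 - s)) * ENNReal.ofReal ((((k+1)! : ℝ))⁻¹) := by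
          rw [hfact, div_eq_mul_inv, ENNReal.ofReal_mul (Real.Gamma_nonneg_of_nonneg (hb k).le)]
      _ = (∫⁻ x in Ioi (0:ℝ),
            ENNReal.ofReal (x ^ ((k : ℝ) + 2 - s - 1) * Real.exp (-(1 * x))))
            * ENNReal.ofReal ((((k+1)! : ℝ))⁻¹) := by
          rw [h1]; norm_num
      _ = ∫⁻ x in Ioi (0:ℝ),
            ENNReal.ofReal (x ^ ((k : ℝ) + 2 - s - 1) * Real.exp (-(1 * x)))
              * ENNReal.ofReal ((((k+1)! : ℝ))⁻¹) := by
          rw [lintegral_mul_const _ hmeas]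
      _ = _ := by
          refine setLIntegral_congr_fun measurableSet_Ioi (fun x hx => ?_)
          have hx0 : (0:ℝ) < x := hx
          rw [← ENNReal.ofReal_mul (by positivity)]
  rw [tsum_congr hterm, ← lintegral_tsum (f := fun (k : ℕ) (x : ℝ) => ENNReal.ofReal (x ^ ((k : ℝ) + 2 - s - 1) * Real.exp (-(1 * x)) * (((k+1)! : ℝ))⁻¹)) (fun k => Measurable.aemeasurable
    (((measurable_id'.pow measurable_const).mul
      ((measurable_const.mul measurable_id').neg.exp)).mul_const _).ennreal_ofReal)]
  have hptwise : ∀ x : ℝ, x ∈ Ioi (0:ℝ) →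
      (∑' k : ℕ, ENNReal.ofReal
        (x ^ ((k : ℝ) + 2 - s - 1) * Real.exp (-(1 * x)) * (((k+1)! : ℝ))⁻¹))
      = ENNReal.ofReal (x ^ (-s) * (1 - Real.exp (-(1 * x)))) := by
    intro x hx
    have hx0 : (0:ℝ) < x := hx
    have hre : ∀ k : ℕ, x ^ ((k : ℝ) + 2 - s - 1) * Real.exp (-(1 * x)) * (((k+1)! : ℝ))⁻¹
        = (x ^ (-s) * Real.exp (-x)) * (x ^ (k+1) / ((k+1)! : ℝ)) := by
      intro k
      rw [show (k : ℝ) + 2 - s - 1 = -s + ((k : ℝ) + 1) by ring, Real.rpow_add hx0,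
        show x ^ ((k : ℝ) + 1) = x ^ ((k+1 : ℕ) : ℝ) by norm_num,
        Real.rpow_natCast]
      rw [one_mul, div_eq_mul_inv]
      ring
    have hsum2 : Summable fun k : ℕ => (x ^ (-s) * Real.exp (-x)) * (x ^ (k+1) / ((k+1)! : ℝ)) := by
      refine Summable.mul_left _ ?_
      exact (summable_nat_add_iff 1).mpr (Real.summable_pow_div_factorial x)
    calc (∑' k : ℕ, ENNReal.ofReal
          (x ^ ((k : ℝ) + 2 - s - 1) * Real.exp (-(1 * x)) * (((k+1)! : ℝ))⁻¹))
        = ∑' k : ℕ, ENNReal.ofReal ((x ^ (-s) * Real.exp (-x)) * (x ^ (k+1) / ((k+1)! : ℝ))) := by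
          exact tsum_congr fun k => by rw [hre k]
      _ = ENNReal.ofReal (∑' k : ℕ, (x ^ (-s) * Real.exp (-x)) * (x ^ (k+1) / ((k+1)! : ℝ))) := by
          refine (ENNReal.ofReal_tsum_of_nonneg (fun k => by positivity) hsum2).symm
      _ = ENNReal.ofReal (x ^ (-s) * (1 - Real.exp (-(1 * x)))) := by
          rw [tsum_mul_left, gmi_exp_sub_one]
          congr 1
          rw [one_mul, Real.exp_neg]
          field_simp
  rw [setLIntegral_congr_fun measurableSet_Ioi hptwise]
  rw [← ofReal_integral_eq_lintegral_ofReal (gmi_integrableOn_main hs1 hs2 one_pos) ?_]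
  · rw [gmi_integral_main hs1 hs2 one_pos]
    norm_num
  · filter_upwards [ae_restrict_mem measurableSet_Ioi] with x hx
    have hx0 : (0:ℝ) < x := hx
    simp only [Pi.zero_apply]
    have h1 : Real.exp (-(1 * x)) ≤ 1 := Real.exp_le_one_iff.mpr (by nlinarith)
    have h2 := Real.rpow_nonneg hx0.le (-s)
    nlinarith

/-- Mean interference at the typical point of a β-Ginibre wireless network with unbounded
path loss `ℓ(r) = r^{−α}`, `2 < α < 4`: with `Q_k ~ Gamma(k, rate c/β)`, `h_k ~ Exp(1)`,
`T_k ~ Bernoulli(β)` (`k ≥ 2`, encoded as `k+2` for `k : ℕ`) mutually independent, the series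
`I = Σ_{k≥2} Q_k^{−α/2} h_k T_k` converges a.s. and `E[I] = −c^{α/2} β^{1−α/2} Γ(1−α/2)`,
where `Γ(1−α/2) < 0` is the Gamma function (analytically continued to `1−α/2 ∈ (−1,0)`);
equivalently, `c ∫₀^∞ q^{−α/2}(1 − e^{−(c/β)q}) dq = −c^{α/2} β^{1−α/2} Γ(1−α/2)`. -/
theorem ginibre_mean_interference_unbounded {Ω : Type*} [MeasurableSpace Ω] (P : Measure Ω)
    [IsProbabilityMeasure P] (α c β : ℝ) (hα2 : 2 < α) (hα4 : α < 4) (hc : 0 < c)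
    (hβ0 : 0 < β) (hβ1 : β ≤ 1)
    (Q h T : ℕ → Ω → ℝ)
    (hQm : ∀ k, Measurable (Q k)) (hhm : ∀ k, Measurable (h k)) (hTm : ∀ k, Measurable (T k))
    (hQ : ∀ k : ℕ, Measure.map (Q k) P = gammaMeasure (k + 2) (c / β))
    (hh : ∀ k : ℕ, Measure.map (h k) P = expMeasure 1)
    (hT : ∀ k : ℕ, Measure.map (T k) P
      = ENNReal.ofReal (1 - β) • Measure.dirac (0 : ℝ) + ENNReal.ofReal β • Measure.dirac 1)
    (hIndep : iIndepFun
      (fun p : ℕ × Fin 3 => ![Q p.1, h p.1, T p.1] p.2) P) :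
    (∀ᵐ ω ∂P, Summable fun k : ℕ => (Q k ω) ^ (-(α / 2)) * h k ω * T k ω) ∧
    Real.Gamma (1 - α / 2) < 0 ∧
    ∫ ω, (∑' k : ℕ, (Q k ω) ^ (-(α / 2)) * h k ω * T k ω) ∂P
      = -(c ^ (α / 2) * β ^ (1 - α / 2) * Real.Gamma (1 - α / 2)) ∧
    c * ∫ q in Ioi (0 : ℝ), q ^ (-(α / 2)) * (1 - Real.exp (-(c / β) * q))
      = -(c ^ (α / 2) * β ^ (1 - α / 2) * Real.Gamma (1 - α / 2)) := by
  set s : ℝ := α / 2 with hs_def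
  set r : ℝ := c / β with hr_def
  have hs1 : 1 < s := by rw [hs_def]; linarith
  have hs2 : s < 2 := by rw [hs_def]; linarith
  have hr : 0 < r := div_pos hc hβ0
  have hs1' : s - 1 ≠ 0 := by intro hcc; rw [sub_eq_zero] at hcc; exact absurd hcc.symm (by linarith)
  have h1s : (1:ℝ) - s ≠ 0 := by intro hcc; rw [sub_eq_zero] at hcc; linarith [hcc.symm]
  -- Gamma facts
  have hG2 : 0 < Real.Gamma (2 - s) := Real.Gamma_pos_of_pos (by linarith)
  have hGrec : Real.Gamma (2 - s) = (1 - s) * Real.Gamma (1 - s) := by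
    rw [show (2:ℝ) - s = (1 - s) + 1 by ring, Real.Gamma_add_one h1s]
  have hGneg : Real.Gamma (1 - s) < 0 := by nlinarith
  have hkey : Real.Gamma (2 - s) / (s - 1) = -Real.Gamma (1 - s) := by
    rw [hGrec]; field_simp; ring
  -- the ENNReal-valued terms
  set term : ℕ → Ω → ENNReal := fun k ω =>
    ENNReal.ofReal ((Q k ω) ^ (-s)) * ENNReal.ofReal (h k ω) * ENNReal.ofReal (T k ω)
    with hterm_def
  have hmeasT : ∀ k, Measurable (term k) := fun k =>
    ((((hQm k).pow measurable_const).ennreal_ofReal).mul (hhm k).ennreal_ofReal).mul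
      (hTm k).ennreal_ofReal
  -- per-k expectation
  have hEk : ∀ k : ℕ, ∫⁻ ω, term k ω ∂P
      = ENNReal.ofReal β * (ENNReal.ofReal (r ^ s)
        * ENNReal.ofReal (Real.Gamma ((k : ℝ) + 2 - s) / Real.Gamma ((k : ℝ) + 2))) := by
    intro k
    have hmeasF : ∀ p : ℕ × Fin 3, Measurable (![Q p.1, h p.1, T p.1] p.2) := by
      rintro ⟨k, j⟩; fin_cases j <;> simp [hQm, hhm, hTm]
    have hQh : IndepFun (Q k) (h k) P := by
      have := hIndep.indepFun (show ((k,0) : ℕ × Fin 3) ≠ (k,1) by simp)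
      exact this
    have hpair : IndepFun (fun ω => (Q k ω, h k ω)) (T k) P := by
      have := hIndep.indepFun_prodMk hmeasF (k,0) (k,1) (k,2) (by simp) (by simp)
      exact this
    have hφ : Measurable fun p : ℝ × ℝ => ENNReal.ofReal (p.1 ^ (-s)) * ENNReal.ofReal p.2 :=
      ((measurable_fst.pow measurable_const).ennreal_ofReal).mul measurable_snd.ennreal_ofReal
    have hψ : Measurable fun x : ℝ => ENNReal.ofReal x := measurable_id.ennreal_ofReal
    have hi1 : IndepFun (fun ω => ENNReal.ofReal ((Q k ω) ^ (-s)) * ENNReal.ofReal (h k ω))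
        (fun ω => ENNReal.ofReal (T k ω)) P := hpair.comp hφ hψ
    have hi2 : IndepFun (fun ω => ENNReal.ofReal ((Q k ω) ^ (-s)))
        (fun ω => ENNReal.ofReal (h k ω)) P :=
      hQh.comp ((measurable_id.pow measurable_const).ennreal_ofReal) hψ
    have hm1 : Measurable fun ω => ENNReal.ofReal ((Q k ω) ^ (-s)) * ENNReal.ofReal (h k ω) :=
      (((hQm k).pow measurable_const).ennreal_ofReal).mul (hhm k).ennreal_ofReal
    have e1 := lintegral_mul_eq_lintegral_mul_lintegral_of_indepFun hm1
      (hTm k).ennreal_ofReal hi1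
    have e2 := lintegral_mul_eq_lintegral_mul_lintegral_of_indepFun
      (((hQm k).pow measurable_const).ennreal_ofReal) (hhm k).ennreal_ofReal hi2
    have hsplit : ∫⁻ ω, term k ω ∂P
        = (∫⁻ ω, ENNReal.ofReal ((Q k ω) ^ (-s)) ∂P) * (∫⁻ ω, ENNReal.ofReal (h k ω) ∂P)
          * ∫⁻ ω, ENNReal.ofReal (T k ω) ∂P := by
      calc ∫⁻ ω, term k ω ∂P
          = ∫⁻ ω, ((fun ω => ENNReal.ofReal ((Q k ω) ^ (-s)) * ENNReal.ofReal (h k ω))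
              * fun ω => ENNReal.ofReal (T k ω)) ω ∂P := rfl
        _ = (∫⁻ ω, ENNReal.ofReal ((Q k ω) ^ (-s)) * ENNReal.ofReal (h k ω) ∂P)
              * ∫⁻ ω, ENNReal.ofReal (T k ω) ∂P := e1
        _ = _ := by
            rw [show (fun ω => ENNReal.ofReal ((Q k ω) ^ (-s)) * ENNReal.ofReal (h k ω))
              = ((fun ω => ENNReal.ofReal ((Q k ω) ^ (-s))) * fun ω => ENNReal.ofReal (h k ω))
              from rfl] at *
            rw [e2]
    have hMQ : ∫⁻ ω, ENNReal.ofReal ((Q k ω) ^ (-s)) ∂P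
        = ENNReal.ofReal (r ^ s * (Real.Gamma ((k : ℝ) + 2 - s) / Real.Gamma ((k : ℝ) + 2))) := by
      rw [← lintegral_map ((measurable_id'.pow measurable_const).ennreal_ofReal) (hQm k), hQ k]
      have hka : (0:ℝ) < (k : ℝ) + 2 := by positivity
      have hks : s < (k : ℝ) + 2 := by
        have : (0:ℝ) ≤ k := Nat.cast_nonneg k
        linarith
      exact gmi_gamma_moment hka hr hks
    have hMh : ∫⁻ ω, ENNReal.ofReal (h k ω) ∂P = 1 := by
      rw [← lintegral_map measurable_id'.ennreal_ofReal (hhm k), hh k]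
      exact gmi_exp_mean
    have hMT : ∫⁻ ω, ENNReal.ofReal (T k ω) ∂P = ENNReal.ofReal β := by
      rw [← lintegral_map measurable_id'.ennreal_ofReal (hTm k), hT k]
      exact gmi_bern_mean
    rw [hsplit, hMQ, hMh, hMT, mul_one,
      ENNReal.ofReal_mul (Real.rpow_nonneg hr.le s)]
    ring
  -- total expectation
  have hS : ∫⁻ ω, ∑' k, term k ω ∂P
      = ENNReal.ofReal β * (ENNReal.ofReal (r ^ s)
        * ENNReal.ofReal (Real.Gamma (2 - s) / (s - 1))) := by
    rw [lintegral_tsum (fun k => (hmeasT k).aemeasurable)]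
    rw [tsum_congr hEk, ENNReal.tsum_mul_left, ENNReal.tsum_mul_left,
      gmi_sum_gamma_ratio hs1 hs2]
  have hSne : ∫⁻ ω, ∑' k, term k ω ∂P ≠ ⊤ := by
    rw [hS]
    exact ENNReal.mul_ne_top ENNReal.ofReal_ne_top
      (ENNReal.mul_ne_top ENNReal.ofReal_ne_top ENNReal.ofReal_ne_top)
  -- a.e. nonnegativity
  have hQnn : ∀ k, ∀ᵐ ω ∂P, 0 ≤ Q k ω := by
    intro k
    rw [ae_iff]
    have hset : {ω | ¬ 0 ≤ Q k ω} = Q k ⁻¹' (Iio 0) := by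
      ext ω; simp [not_le]
    rw [hset, ← Measure.map_apply (hQm k) measurableSet_Iio, hQ k, gammaMeasure,
      withDensity_apply _ measurableSet_Iio]
    exact lintegral_gammaPDF_of_nonpos le_rfl
  have hhnn : ∀ k, ∀ᵐ ω ∂P, 0 ≤ h k ω := by
    intro k
    rw [ae_iff]
    have hset : {ω | ¬ 0 ≤ h k ω} = h k ⁻¹' (Iio 0) := by
      ext ω; simp [not_le]
    rw [hset, ← Measure.map_apply (hhm k) measurableSet_Iio, hh k,
      show expMeasure 1 = gammaMeasure 1 1 from rfl, gammaMeasure,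
      withDensity_apply _ measurableSet_Iio]
    exact lintegral_gammaPDF_of_nonpos le_rfl
  have hTnn : ∀ k, ∀ᵐ ω ∂P, 0 ≤ T k ω := by
    intro k
    rw [ae_iff]
    have hset : {ω | ¬ 0 ≤ T k ω} = T k ⁻¹' (Iio 0) := by
      ext ω; simp [not_le]
    rw [hset, ← Measure.map_apply (hTm k) measurableSet_Iio, hT k]
    rw [Measure.add_apply, Measure.smul_apply, Measure.smul_apply,
      Measure.dirac_apply' _ measurableSet_Iio, Measure.dirac_apply' _ measurableSet_Iio]
    simp
  have hnn : ∀ᵐ ω ∂P, ∀ k, 0 ≤ Q k ω ∧ 0 ≤ h k ω ∧ 0 ≤ T k ω := by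
    rw [ae_all_iff]
    exact fun k => ((hQnn k).and ((hhnn k).and (hTnn k)))
  have htsum_lt : ∀ᵐ ω ∂P, ∑' k, term k ω < ⊤ :=
    ae_lt_top (Measurable.ennreal_tsum hmeasT) hSne
  -- pointwise identification of terms under nonnegativity
  have hterm_id : ∀ ω, (∀ k, 0 ≤ Q k ω ∧ 0 ≤ h k ω ∧ 0 ≤ T k ω) →
      ∀ k, (term k ω).toReal = (Q k ω) ^ (-s) * h k ω * T k ω := by
    intro ω hω k
    obtain ⟨hq, hh', ht⟩ := hω k
    rw [hterm_def]
    simp only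
    rw [ENNReal.toReal_mul, ENNReal.toReal_mul, ENNReal.toReal_ofReal (by positivity),
      ENNReal.toReal_ofReal hh', ENNReal.toReal_ofReal ht]
  -- first conclusion: a.s. summability
  have hconc1 : ∀ᵐ ω ∂P, Summable fun k : ℕ => (Q k ω) ^ (-s) * h k ω * T k ω := by
    filter_upwards [htsum_lt, hnn] with ω h1 h2
    have hsum := ENNReal.summable_toReal h1.ne
    exact hsum.congr (hterm_id ω h2)
  refine ⟨hconc1, ?_, ?_, ?_⟩
  · exact hGneg
  · -- expectation of the series
    set g : Ω → ℝ := fun ω => ∑' k : ℕ, (Q k ω) ^ (-s) * h k ω * T k ω with hg_def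
    have hterm_ne : ∀ k ω, term k ω ≠ ⊤ := fun k ω =>
      ENNReal.mul_ne_top (ENNReal.mul_ne_top ENNReal.ofReal_ne_top ENNReal.ofReal_ne_top)
        ENNReal.ofReal_ne_top
    have hg_eq : g =ᵐ[P] fun ω => (∑' k, term k ω).toReal := by
      filter_upwards [hnn] with ω h2
      rw [hg_def]
      simp only
      rw [ENNReal.tsum_toReal_eq (fun k => hterm_ne k ω)]
      exact tsum_congr fun k => (hterm_id ω h2 k).symm
    have hg_nonneg : 0 ≤ᵐ[P] g := by
      filter_upwards [hnn] with ω h2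
      refine tsum_nonneg fun k => ?_
      obtain ⟨hq, hh', ht⟩ := h2 k
      positivity
    have hg_meas : AEStronglyMeasurable g P := by
      have hm2 : Measurable fun ω => (∑' k, term k ω).toReal :=
        (Measurable.ennreal_tsum hmeasT).ennreal_toReal
      exact (hm2.aemeasurable.congr hg_eq.symm).aestronglyMeasurable
    have hInt := integral_eq_lintegral_of_nonneg_ae hg_nonneg hg_meas
    have hof : ∫⁻ ω, ENNReal.ofReal (g ω) ∂P = ∫⁻ ω, ∑' k, term k ω ∂P := by
      refine lintegral_congr_ae ?_
      filter_upwards [hg_eq, htsum_lt] with ω h1 h2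
      rw [h1, ENNReal.ofReal_toReal h2.ne]
    rw [hInt, hof, hS, ENNReal.toReal_mul, ENNReal.toReal_mul,
      ENNReal.toReal_ofReal hβ0.le, ENNReal.toReal_ofReal (Real.rpow_nonneg hr.le s),
      ENNReal.toReal_ofReal (div_nonneg hG2.le (by linarith)), hkey]
    have hrs : r ^ s = c ^ s / β ^ s := Real.div_rpow hc.le hβ0.le s
    have hb1s : β ^ ((1:ℝ) - s) = β / β ^ s := by rw [Real.rpow_sub hβ0, Real.rpow_one]
    rw [hrs, hb1s]
    ring
  · -- the integral identity
    have hintegrand : ∀ q : ℝ, q ^ (-s) * (1 - Real.exp (-r * q))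
        = q ^ (-s) * (1 - Real.exp (-(r * q))) := by
      intro q; rw [neg_mul]
    simp_rw [hintegrand]
    rw [gmi_integral_main hs1 hs2 hr]
    have hr1 : r ^ (s - 1) = c ^ (s - 1) / β ^ (s - 1) := Real.div_rpow hc.le hβ0.le (s - 1)
    have hc1 : c * c ^ (s - 1) = c ^ s := by
      nth_rewrite 1 [← Real.rpow_one c]
      rw [← Real.rpow_add hc]
      congr 1; ring
    have hb2 : β ^ ((1:ℝ) - s) = (β ^ (s - 1))⁻¹ := by
      rw [← Real.rpow_neg hβ0.le]
      congr 1; ring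
    have hcr : c * r ^ (s - 1) = c ^ s * β ^ ((1:ℝ) - s) := by
      rw [hr1, hb2, div_eq_mul_inv, ← mul_assoc, hc1]
    rw [mul_div_assoc, hkey,
      show c * (r ^ (s - 1) * -Real.Gamma (1 - s)) = (c * r ^ (s - 1)) * -Real.Gamma (1 - s)
        by ring, hcr]
    ring
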